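/- Let U_s : ℝ → ℝ be twice continuously differentiable, α ∈ ℝ, c ∈ ℂ, and let ψ be a twice continuously differentiable complex-valued solution of the Rayleigh equation with parameters α, c on an open interval I. Set Y(y) = (U_s(y) − c)² and suppose that ψ(y) ≠ 0 and U_s(y) ≠ c on I. Then ω(y) = (U_s(y) − c)(U_s'(y)ψ(y) − (U_s(y) − c)ψ'(y)) / ψ(y) is differentiable on I and satisfies ω'(y) = −α² Y(y) + ω(y)² / Y(y) for all y ∈ I. -/

import Mathlib

open Set

/-- `ψ` (together with its first and second derivative functions `ψ'`, `ψ''`) is a twice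
continuously differentiable solution on `I` of the Rayleigh equation
`(Us y - c) (ψ'' - α² ψ) - Us'' ψ = 0` with parameters `α`, `c` and profile `Us`. -/
def IsRayleighSolutionOn (Us : ℝ → ℝ) (α : ℝ) (c : ℂ)
    (ψ ψ' ψ'' : ℝ → ℂ) (I : Set ℝ) : Prop :=
  (∀ y ∈ I, HasDerivAt ψ (ψ' y) y) ∧
  (∀ y ∈ I, HasDerivAt ψ' (ψ'' y) y) ∧
  ContinuousOn ψ'' I ∧
  ∀ y ∈ I, ((Us y : ℂ) - c) * (ψ'' y - (α : ℂ)^2 * ψ y)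
      - Complex.ofReal (deriv (deriv Us) y) * ψ y = 0

/-- The function `ω = (Us − c)(Us' ψ − (Us − c) ψ') / ψ` satisfies the
Riccati equation `ω' = −α² Y + ω²/Y` with `Y = (Us − c)²`. -/
theorem rayleigh_omega_riccati
    (Us : ℝ → ℝ) (hUs : ContDiff ℝ 2 Us) (α : ℝ) (c : ℂ)
    (a b : ℝ) (ψ ψ' ψ'' : ℝ → ℂ)
    (hsol : IsRayleighSolutionOn Us α c ψ ψ' ψ'' (Ioo a b))
    (hψ : ∀ y ∈ Ioo a b, ψ y ≠ 0)
    (hc : ∀ y ∈ Ioo a b, (Us y : ℂ) ≠ c) :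
    ∀ y ∈ Ioo a b,
      HasDerivAt
        (fun y : ℝ => ((Us y : ℂ) - c) *
          (Complex.ofReal (deriv Us y) * ψ y - ((Us y : ℂ) - c) * ψ' y) / ψ y)
        (-(α : ℂ)^2 * ((Us y : ℂ) - c)^2
          + (((Us y : ℂ) - c) *
              (Complex.ofReal (deriv Us y) * ψ y - ((Us y : ℂ) - c) * ψ' y) / ψ y)^2
            / ((Us y : ℂ) - c)^2) y := by
  obtain ⟨hψ1, hψ2, -, heq⟩ := hsol
  intro y hy
  have h2 : ContDiff ℝ 1 (deriv Us) := by
    have := (contDiff_succ_iff_deriv (n := 1)).mp (by exact_mod_cast hUs)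
    exact this.2.2
  have hUd : HasDerivAt Us (deriv Us y) y :=
    (hUs.differentiable (by norm_num) y).hasDerivAt
  have hUd2 : HasDerivAt (deriv Us) (deriv (deriv Us) y) y :=
    (h2.differentiable one_ne_zero y).hasDerivAt
  have hu : HasDerivAt (fun t : ℝ => ((Us t : ℂ) - c)) (Complex.ofReal (deriv Us y)) y :=
    (hUd.ofReal_comp).sub_const c
  have hu' : HasDerivAt (fun t : ℝ => Complex.ofReal (deriv Us t))
      (Complex.ofReal (deriv (deriv Us) y)) y := hUd2.ofReal_comp
  have hN := (hu.mul ((hu'.mul (hψ1 y hy)).sub (hu.mul (hψ2 y hy)))).div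
      (hψ1 y hy) (hψ y hy)
  convert hN using 1
  · rfl
  · rfl
  have hE := heq y hy
  have hp := hψ y hy
  have hu0 : ((Us y : ℂ) - c) ≠ 0 := sub_ne_zero.mpr (hc y hy)
  simp only [Pi.mul_apply, Pi.sub_apply]
  field_simp
  ring_nf
  linear_combination (ψ y * ((Us y:ℂ)-c)) * hE
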